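/- Proposition 9: For every fixed ε ∈ (0,1), ( Ψ(ε,d) − ε ) / √d → √( 2·ε·(1−ε) ) as d → 0⁺; equivalently Ψ(ε,d) = ε + √(2·ε·(1−ε)·d) + o(√d). -/

import Mathlib

open Real Filter


noncomputable def stmtPhi (a u : ℝ) : ℝ := Real.log (1 - a*u) - a * Real.log (1 - u)

lemma stmtPhi_zero (a : ℝ) : stmtPhi a 0 = 0 := by simp [stmtPhi]

lemma hasDerivAt_stmtPhi (a : ℝ) {u : ℝ} (hu0 : 1 - u ≠ 0) (hu1 : 1 - a*u ≠ 0) :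
    HasDerivAt (stmtPhi a) (a*(1-a)*u / ((1-u)*(1-a*u))) u := by
  have h1 : HasDerivAt (fun u : ℝ => 1 - a*u) (-a) u := by
    simpa using ((hasDerivAt_id u).const_mul a).const_sub 1
  have h2 : HasDerivAt (fun u : ℝ => 1 - u) (-1) u := by
    simpa using (hasDerivAt_id u).const_sub 1
  have h := (h1.log hu1).sub ((h2.log hu0).const_mul a)
  convert h using 1 <;> try rfl
  field_simp
  ring

lemma quad_deriv (c x : ℝ) : HasDerivAt (fun x : ℝ => c*x^2/2) (c*x) x := by
  have h := (hasDerivAt_pow 2 x).const_mul (c/2)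
  convert h using 1 <;> try rfl
  · ext y; ring
  · simp; ring

lemma stmtPhi_lower {a : ℝ} (ha0 : 0 < a) (ha1 : a < 1) {u : ℝ} (hu0 : 0 ≤ u) (hu1 : u < 1) :
    a * (1-a) * u^2 / 2 ≤ stmtPhi a u := by
  set g : ℝ → ℝ := fun x => stmtPhi a x - a*(1-a)*x^2/2 with hg
  have hderiv : ∀ x ∈ Set.Icc (0:ℝ) u, HasDerivAt g
      (a*(1-a)*x / ((1-x)*(1-a*x)) - a*(1-a)*x) x := by
    intro x hx
    have hx1 : x < 1 := lt_of_le_of_lt hx.2 hu1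
    have h1x : (0:ℝ) < 1 - x := by linarith
    have h1ax : (0:ℝ) < 1 - a*x := by nlinarith [hx.1]
    exact (hasDerivAt_stmtPhi a h1x.ne' h1ax.ne').sub (quad_deriv (a*(1-a)) x)
  have hmono : MonotoneOn g (Set.Icc 0 u) := by
    apply monotoneOn_of_deriv_nonneg (convex_Icc 0 u)
    · exact fun x hx => (hderiv x hx).continuousAt.continuousWithinAt
    · intro x hx
      rw [interior_Icc] at hx
      exact (hderiv x (Set.mem_Icc_of_Ioo hx)).differentiableAt.differentiableWithinAt
    · intro x hx
      rw [interior_Icc] at hx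
      rw [(hderiv x (Set.mem_Icc_of_Ioo hx)).deriv]
      have hx0 : 0 < x := hx.1
      have hx1 : x < 1 := lt_of_lt_of_le hx.2 (le_of_lt hu1)
      have h1x : (0:ℝ) < 1 - x := by linarith
      have h1ax : (0:ℝ) < 1 - a*x := by nlinarith
      rw [sub_nonneg, le_div_iff₀ (by positivity)]
      have hD : (1-x)*(1-a*x) ≤ 1 := by nlinarith
      have hnum : (0:ℝ) ≤ a*(1-a)*x :=
        (mul_nonneg (mul_nonneg ha0.le (by linarith)) hx0.le)
      exact mul_le_of_le_one_right hnum hD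
  have h := hmono (Set.mem_Icc.mpr ⟨le_refl 0, hu0⟩) (Set.mem_Icc.mpr ⟨hu0, le_refl u⟩) hu0
  have hg0 : g 0 = 0 := by simp [hg, stmtPhi]
  rw [hg0] at h
  simp only [hg] at h
  linarith

lemma stmtPhi_upper {a : ℝ} (ha0 : 0 < a) (ha1 : a < 1) {u : ℝ} (hu0 : 0 ≤ u) (hu1 : u < 1) :
    stmtPhi a u ≤ a * (1-a) * u^2 / (2*(1-u)^2) := by
  set c : ℝ := a*(1-a)/(1-u)^2 with hc
  set g : ℝ → ℝ := fun x => c*x^2/2 - stmtPhi a x with hg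
  have hderiv : ∀ x ∈ Set.Icc (0:ℝ) u, HasDerivAt g
      (c*x - a*(1-a)*x / ((1-x)*(1-a*x))) x := by
    intro x hx
    have hx1 : x < 1 := lt_of_le_of_lt hx.2 hu1
    have h1x : (0:ℝ) < 1 - x := by linarith
    have h1ax : (0:ℝ) < 1 - a*x := by nlinarith [hx.1]
    exact (quad_deriv c x).sub (hasDerivAt_stmtPhi a h1x.ne' h1ax.ne')
  have hmono : MonotoneOn g (Set.Icc 0 u) := by
    apply monotoneOn_of_deriv_nonneg (convex_Icc 0 u)
    · exact fun x hx => (hderiv x hx).continuousAt.continuousWithinAt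
    · intro x hx
      rw [interior_Icc] at hx
      exact (hderiv x (Set.mem_Icc_of_Ioo hx)).differentiableAt.differentiableWithinAt
    · intro x hx
      rw [interior_Icc] at hx
      rw [(hderiv x (Set.mem_Icc_of_Ioo hx)).deriv]
      have hx0 : 0 < x := hx.1
      have hxu : x < u := hx.2
      have hx1 : x < 1 := lt_trans hxu hu1
      have h1x : (0:ℝ) < 1 - x := by linarith
      have h1u : (0:ℝ) < 1 - u := by linarith
      have h1ax : (0:ℝ) < 1 - a*x := by nlinarith
      rw [sub_nonneg, hc]
      have hrw : a*(1-a)/(1-u)^2*x = a*(1-a)*x/(1-u)^2 := by ring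
      rw [hrw, div_le_div_iff₀ (mul_pos h1x h1ax) (by positivity)]
      have hax : 1-x ≤ 1-a*x := by nlinarith
      have hDD : (1-u)^2 ≤ (1-x)*(1-a*x) := by
        calc (1-u)^2 ≤ (1-x)^2 := by nlinarith
          _ ≤ (1-x)*(1-a*x) := by nlinarith [mul_le_mul_of_nonneg_left hax h1x.le]
      have hnum : (0:ℝ) ≤ a*(1-a)*x :=
        (mul_nonneg (mul_nonneg ha0.le (by linarith)) hx0.le)
      nlinarith [mul_le_mul_of_nonneg_left hDD hnum]
  have h := hmono (Set.mem_Icc.mpr ⟨le_refl 0, hu0⟩) (Set.mem_Icc.mpr ⟨hu0, le_refl u⟩) hu0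
  have hg0 : g 0 = 0 := by simp [hg, stmtPhi]
  rw [hg0] at h
  simp only [hg, hc] at h
  have h1u : (0:ℝ) < 1 - u := by linarith
  have hC : a*(1-a)/(1-u)^2*(1-u)^2 = a*(1-a) := div_mul_cancel₀ _ (by positivity)
  have h' : stmtPhi a u ≤ a*(1-a)/(1-u)^2*u^2/2 := by linarith
  have hm := mul_le_mul_of_nonneg_right h' (by positivity : (0:ℝ) ≤ 2*(1-u)^2)
  have hr : a*(1-a)/(1-u)^2*u^2/2*(2*(1-u)^2) = a*(1-a)/(1-u)^2*(1-u)^2*u^2 := by ring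
  rw [le_div_iff₀ (by positivity)]
  calc stmtPhi a u * (2*(1-u)^2) ≤ _ := hm
    _ = a*(1-a)*u^2 := by rw [hr, hC]


/-- Proposition 9: for fixed `ε ∈ (0,1)`, with `t(d)` the unique root `> 1` of
`t^ε(t−1)^{1−ε}/(t−1+ε) = e^{−d}` and `Ψ(ε,d) = e^{−d}·(t(d)−1)^{ε−1}·t(d)^{1−ε}·ε`,
`(Ψ(ε,d) − ε)/√d → √(2·ε·(1−ε))` as `d → 0⁺`, i.e.
`Ψ(ε,d) = ε + √(2·ε·(1−ε)·d) + o(√d)`. -/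
theorem stmt_17 (e : ℝ) (he : e ∈ Set.Ioo (0 : ℝ) 1) (t : ℝ → ℝ)
    (ht : ∀ d : ℝ, 0 < d → 1 < t d ∧
      (t d) ^ e * (t d - 1) ^ (1 - e) / (t d - 1 + e) = Real.exp (-d)) :
    Tendsto (fun d : ℝ =>
        (Real.exp (-d) * (t d - 1) ^ (e - 1) * (t d) ^ (1 - e) * e - e) / Real.sqrt d)
      (nhdsWithin 0 (Set.Ioi 0)) (nhds (Real.sqrt (2 * e * (1 - e)))) := by
  obtain ⟨he0, he1⟩ := he
  obtain ⟨a, ha⟩ : ∃ a : ℝ, a = 1 - e := ⟨1 - e, rfl⟩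
  have ha0 : 0 < a := by rw [ha]; linarith
  have ha1 : a < 1 := by rw [ha]; linarith
  have hp : 0 < a * (1 - a) := mul_pos ha0 (by linarith)
  obtain ⟨U, hU⟩ : ∃ U : ℝ → ℝ, U = fun d => 1 / t d := ⟨_, rfl⟩
  -- d = phi a (U d)
  have key : ∀ d : ℝ, 0 < d → d = stmtPhi a (U d) := by
    intro d hd
    obtain ⟨hT, heq⟩ := ht d hd
    have hT0 : (0:ℝ) < t d := lt_trans one_pos hT
    have hT1 : (0:ℝ) < t d - 1 := by linarith
    have hTe : (0:ℝ) < t d - 1 + e := by linarith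
    have hlog := congrArg Real.log heq
    rw [Real.log_exp, Real.log_div
        (mul_pos (Real.rpow_pos_of_pos hT0 e) (Real.rpow_pos_of_pos hT1 (1-e))).ne'
        hTe.ne',
        Real.log_mul (Real.rpow_pos_of_pos hT0 e).ne' (Real.rpow_pos_of_pos hT1 (1-e)).ne',
        Real.log_rpow hT0, Real.log_rpow hT1] at hlog
    have h1 : (1:ℝ) - a * (U d) = (t d - 1 + e)/(t d) := by
      rw [hU, ha]; field_simp; ring
    have h2 : (1:ℝ) - (U d) = (t d - 1)/(t d) := by
      rw [hU]; simp only []; field_simp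
    rw [stmtPhi, h1, h2, Real.log_div hTe.ne' hT0.ne', Real.log_div hT1.ne' hT0.ne', ha]
    linear_combination hlog
  -- U d in (0,1)
  have hUmem : ∀ d : ℝ, 0 < d → U d ∈ Set.Ioo (0:ℝ) 1 := by
    intro d hd
    have hT := (ht d hd).1
    have hT0 : (0:ℝ) < t d := lt_trans one_pos hT
    constructor
    · rw [hU]; positivity
    · rw [hU]; rw [div_lt_one hT0]; linarith
  -- expression rewrite
  have expr_eq : ∀ d : ℝ, 0 < d →
      (Real.exp (-d) * (t d - 1) ^ (e - 1) * (t d) ^ (1 - e) * e - e) / Real.sqrt d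
        = (e * (1 - e) / (1 - a * U d)) / Real.sqrt (stmtPhi a (U d) / (U d)^2) := by
    intro d hd
    obtain ⟨hT, heq⟩ := ht d hd
    have hT0 : (0:ℝ) < t d := lt_trans one_pos hT
    have hT1 : (0:ℝ) < t d - 1 := by linarith
    have hTe : (0:ℝ) < t d - 1 + e := by linarith
    have hu0 : 0 < U d := (hUmem d hd).1
    have hmul : Real.exp (-d) * (t d - 1) ^ (e-1) * (t d) ^ (1-e) = t d / (t d - 1 + e) := by
      rw [← heq]
      have h1 : (t d - 1)^(1-e) * (t d - 1)^(e-1) = 1 := by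
        rw [← Real.rpow_add hT1, show (1-e) + (e-1) = 0 by ring, Real.rpow_zero]
      have h2 : (t d) ^ e * (t d) ^ (1-e) = t d := by
        rw [← Real.rpow_add hT0, show e + (1-e) = 1 by ring, Real.rpow_one]
      calc (t d)^e * (t d - 1)^(1-e) / (t d - 1 + e) * (t d - 1)^(e-1) * (t d)^(1-e)
          = ((t d)^e * (t d)^(1-e)) * ((t d - 1)^(1-e) * (t d - 1)^(e-1)) / (t d - 1 + e) := by
            ring
        _ = t d / (t d - 1 + e) := by rw [h1, h2]; ring
    have hnum : Real.exp (-d) * (t d - 1) ^ (e-1) * (t d) ^ (1-e) * e - e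
        = e * (1 - e) / (t d - 1 + e) := by
      rw [hmul]; field_simp; ring
    have h3 : (U d)^2 * (stmtPhi a (U d) / (U d)^2) = d := by
      rw [← key d hd]; field_simp
    have hsqrt : Real.sqrt d = U d * Real.sqrt (stmtPhi a (U d) / (U d)^2) := by
      conv_lhs => rw [← h3]
      rw [Real.sqrt_mul (sq_nonneg _), Real.sqrt_sq hu0.le]
    have hphi_pos : 0 < stmtPhi a (U d) := by rw [← key d hd]; exact hd
    have hS : 0 < Real.sqrt (stmtPhi a (U d) / (U d)^2) :=
      Real.sqrt_pos.mpr (by positivity)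
    have h1 : (1:ℝ) - a * (U d) = (t d - 1 + e)/(t d) := by
      rw [hU, ha]; field_simp; ring
    rw [hnum, hsqrt, h1]
    have hS' : Real.sqrt (stmtPhi a (U d) / (U d)^2) ≠ 0 := hS.ne'
    rw [hU] at hS' ⊢
    simp only at hS' ⊢
    rw [div_div, div_div, div_eq_div_iff (by positivity) (by positivity)]
    field_simp
  -- U d > 0 eventually
  have hUpos : ∀ᶠ d in nhdsWithin (0:ℝ) (Set.Ioi 0), U d ∈ Set.Ioi (0:ℝ) :=
    Filter.eventually_of_mem self_mem_nhdsWithin (fun d hd => (hUmem d hd).1)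
  -- U d ≤ sqrt (2 d / p) eventually
  have hUle : ∀ᶠ d in nhdsWithin (0:ℝ) (Set.Ioi 0), U d ≤ Real.sqrt (2*d/(a*(1-a))) := by
    apply Filter.eventually_of_mem self_mem_nhdsWithin
    intro d hd
    have hd : (0:ℝ) < d := hd
    obtain ⟨hu0, hu1⟩ := hUmem d hd
    have hlow := stmtPhi_lower ha0 ha1 hu0.le hu1
    have h2 : (U d)^2 ≤ 2*d/(a*(1-a)) := by
      rw [le_div_iff₀ hp]
      nlinarith [hlow, key d hd]
    calc U d = Real.sqrt ((U d)^2) := (Real.sqrt_sq hu0.le).symm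
      _ ≤ Real.sqrt (2*d/(a*(1-a))) := Real.sqrt_le_sqrt h2
  have htend0 : Tendsto (fun d : ℝ => Real.sqrt (2*d/(a*(1-a)))) (nhdsWithin 0 (Set.Ioi 0)) (nhds 0) := by
    have hc : Continuous fun d : ℝ => Real.sqrt (2*d/(a*(1-a))) := by
      exact Real.continuous_sqrt.comp ((continuous_const.mul continuous_id).div_const _)
    have := hc.tendsto' 0 0 (by simp)
    exact this.mono_left nhdsWithin_le_nhds
  have hU0 : Tendsto U (nhdsWithin 0 (Set.Ioi 0)) (nhds 0) :=
    squeeze_zero' (Filter.eventually_of_mem self_mem_nhdsWithin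
      (fun d hd => (hUmem d hd).1.le)) hUle htend0
  have hUIoi : Tendsto U (nhdsWithin 0 (Set.Ioi 0)) (nhdsWithin 0 (Set.Ioi 0)) :=
    tendsto_nhdsWithin_iff.mpr ⟨hU0, hUpos⟩
  -- phi ratio limit
  have hratio : Tendsto (fun u : ℝ => stmtPhi a u / u^2) (nhdsWithin 0 (Set.Ioi 0))
      (nhds (a*(1-a)/2)) := by
    have hIoo : Set.Ioo (0:ℝ) 1 ∈ nhdsWithin (0:ℝ) (Set.Ioi 0) :=
      Ioo_mem_nhdsGT_of_mem (by norm_num : (0:ℝ) ∈ Set.Ico (0:ℝ) 1)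
    have hupperlim : Tendsto (fun u : ℝ => a*(1-a)/(2*(1-u)^2)) (nhdsWithin 0 (Set.Ioi 0))
        (nhds (a*(1-a)/2)) := by
      have hc : ContinuousAt (fun u : ℝ => a*(1-a)/(2*(1-u)^2)) 0 := by
        apply ContinuousAt.div continuousAt_const
        · exact (continuous_const.mul ((continuous_const.sub continuous_id).pow 2)).continuousAt
        · norm_num
      have h := hc.tendsto.mono_left (nhdsWithin_le_nhds (s := Set.Ioi (0:ℝ)))
      simpa using h
    apply tendsto_of_tendsto_of_tendsto_of_le_of_le' tendsto_const_nhds hupperlim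
    · apply Filter.eventually_of_mem hIoo
      intro u hu
      have := stmtPhi_lower ha0 ha1 hu.1.le hu.2
      rw [le_div_iff₀ (pow_pos hu.1 2)]
      nlinarith
    · apply Filter.eventually_of_mem hIoo
      intro u hu
      have := stmtPhi_upper ha0 ha1 hu.1.le hu.2
      have h1u : (0:ℝ) < 1 - u := by linarith [hu.2]
      have hpos2 : (0:ℝ) < 2*(1-u)^2 := by nlinarith [pow_pos h1u 2]
      rw [div_le_div_iff₀ (pow_pos hu.1 2) hpos2]
      have hstep := mul_le_mul_of_nonneg_right this hpos2.le
      calc stmtPhi a u * (2*(1-u)^2) ≤ a*(1-a)*u^2/(2*(1-u)^2) * (2*(1-u)^2) := hstep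
        _ = a*(1-a)*u^2 := div_mul_cancel₀ _ hpos2.ne'
  have hcomp : Tendsto (fun d : ℝ => stmtPhi a (U d) / (U d)^2) (nhdsWithin 0 (Set.Ioi 0))
      (nhds (a*(1-a)/2)) := hratio.comp hUIoi
  have hsqrtcomp : Tendsto (fun d : ℝ => Real.sqrt (stmtPhi a (U d) / (U d)^2))
      (nhdsWithin 0 (Set.Ioi 0)) (nhds (Real.sqrt (a*(1-a)/2))) :=
    (Real.continuous_sqrt.tendsto _).comp hcomp
  have hfirst : Tendsto (fun d : ℝ => e*(1-e)/(1 - a * U d)) (nhdsWithin 0 (Set.Ioi 0))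
      (nhds (e*(1-e))) := by
    have hc : ContinuousAt (fun x : ℝ => e*(1-e)/(1-a*x)) 0 := by
      apply ContinuousAt.div continuousAt_const
      · exact (continuous_const.sub (continuous_const.mul continuous_id)).continuousAt
      · norm_num
    have h := hc.tendsto.comp hU0
    simpa [Function.comp_def] using h
  have hSne : Real.sqrt (a*(1-a)/2) ≠ 0 :=
    (Real.sqrt_pos.mpr (by linarith)).ne'
  have hdiv := hfirst.div hsqrtcomp hSne
  have hval : e*(1-e) / Real.sqrt (a*(1-a)/2) = Real.sqrt (2*e*(1-e)) := by
    have hq : a*(1-a) = e*(1-e) := by rw [ha]; ring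
    have hee : (0:ℝ) < e*(1-e) := mul_pos he0 (by linarith)
    rw [hq, div_eq_iff (Real.sqrt_ne_zero'.mpr (by linarith)),
      ← Real.sqrt_mul (by linarith : (0:ℝ) ≤ 2*e*(1-e)),
      show 2*e*(1-e)*(e*(1-e)/2) = (e*(1-e))^2 by ring,
      Real.sqrt_sq (by linarith : (0:ℝ) ≤ e*(1-e))]
  rw [← hval]
  apply Tendsto.congr' _ hdiv
  exact Filter.eventually_of_mem self_mem_nhdsWithin (fun d hd => (expr_eq d hd).symm)
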